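/- Let n ≥ 3 be an integer and fix β > 0. For n < α < n + 1, let C₁(α) = {y ∈ ℝⁿ : Σ_{i=2}^{n} y_i² ≤ (n+1−α) y₁²} and X_{α,β} = Bⁿ ∪ (B^n_{1+1/β} ∩ C₁(α)), where Bⁿ and B^n_{1+1/β} are the closed balls of radius 1 and 1 + 1/β centered at the origin. Then there exists α₀ with n < α₀ < n + 1 such that for every α with α₀ ≤ α < n + 1: ∫_{X_{α,β}} |y|^{α−n−4} ( −(n+1−α) y₁² + Σ_{i=2}^{n} y_i² ) dy > 0. -/

import Mathlib

open MeasureTheory Metric Set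
open scoped ENNReal NNReal


lemma aux_int (n : ℕ) (hn : 3 ≤ n) :
    IntegrableOn (fun y : EuclideanSpace ℝ (Fin n) => ‖y‖ ^ (-2 : ℝ))
      (Metric.closedBall 0 1) volume := by
  have hnpos : 0 < n := by omega
  constructor
  · exact ((measurable_norm.pow_const _).aestronglyMeasurable)
  · rw [hasFiniteIntegral_def]
    set μ : Measure (EuclideanSpace ℝ (Fin n)) := volume
    set A : ℕ → Set (EuclideanSpace ℝ (Fin n)) :=
      fun k => closedBall 0 ((1/2 : ℝ)^k) \ ball 0 ((1/2 : ℝ)^(k+1)) with hA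
    have hcover : closedBall (0 : EuclideanSpace ℝ (Fin n)) 1 ⊆ {0} ∪ ⋃ k, A k := by
      intro y hy
      rcases eq_or_ne y 0 with rfl | hy0
      · exact Or.inl rfl
      · refine Or.inr ?_
        have hypos : 0 < ‖y‖ := norm_pos_iff.mpr hy0
        have hyle : ‖y‖ ≤ 1 := mem_closedBall_zero_iff.mp hy
        have hex : ∃ m : ℕ, (1/2 : ℝ)^(m+1) < ‖y‖ := by
          obtain ⟨m, hm⟩ := exists_pow_lt_of_lt_one hypos (by norm_num : (1/2:ℝ) < 1)
          exact ⟨m, lt_of_le_of_lt (by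
            apply pow_le_pow_of_le_one (by norm_num) (by norm_num); omega) hm⟩
        refine mem_iUnion.mpr ⟨Nat.find hex, ?_, ?_⟩
        · rw [mem_closedBall_zero_iff]
          rcases Nat.eq_zero_or_pos (Nat.find hex) with h0 | h0
          · rw [h0]; simpa using hyle
          · obtain ⟨j, hj⟩ := Nat.exists_eq_succ_of_ne_zero h0.ne'
            have := Nat.find_min hex (m := j) (by omega)
            rw [hj]; push_neg at this; exact this
        · rw [mem_ball_zero_iff]
          exact not_lt.mpr (Nat.find_spec hex).le
    calc ∫⁻ y in closedBall (0 : EuclideanSpace ℝ (Fin n)) 1, ‖(‖y‖ ^ (-2:ℝ))‖₊ ∂μ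
        ≤ ∫⁻ y in ({0} ∪ ⋃ k, A k), ‖(‖y‖ ^ (-2:ℝ))‖₊ ∂μ := lintegral_mono_set hcover
      _ ≤ (∫⁻ y in ({0} : Set (EuclideanSpace ℝ (Fin n))), ‖(‖y‖ ^ (-2:ℝ))‖₊ ∂μ)
          + ∫⁻ y in (⋃ k, A k), ‖(‖y‖ ^ (-2:ℝ))‖₊ ∂μ := lintegral_union_le _ _ _
      _ ≤ 0 + ∑' k, ∫⁻ y in A k, ‖(‖y‖ ^ (-2:ℝ))‖₊ ∂μ := by
          gcongr
          · rw [setLIntegral_measure_zero]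
            haveI : Nonempty (Fin n) := ⟨⟨0, hnpos⟩⟩
            have := Measure.addHaar_submodule (μ := μ)
              (⊥ : Submodule ℝ (EuclideanSpace ℝ (Fin n))) bot_ne_top
            simpa using this
          · exact lintegral_iUnion_le _ _
      _ = ∑' k, ∫⁻ y in A k, ‖(‖y‖ ^ (-2:ℝ))‖₊ ∂μ := by rw [zero_add]
      _ ≤ ∑' k, (ENNReal.ofReal ((4:ℝ)^(k+1)) * μ (A k)) := by
          refine ENNReal.tsum_le_tsum fun k => ?_
          have hb : ∀ y ∈ A k,
              (‖(‖y‖ ^ (-2:ℝ))‖₊ : ℝ≥0∞) ≤ ENNReal.ofReal ((4:ℝ)^(k+1)) := by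
            intro y hy
            have h1 : (1/2 : ℝ)^(k+1) ≤ ‖y‖ := by
              have := hy.2; rw [mem_ball_zero_iff] at this; linarith [not_lt.mp this]
            have hpos : (0:ℝ) < (1/2 : ℝ)^(k+1) := by positivity
            have hrle : ‖y‖ ^ (-2:ℝ) ≤ ((1/2:ℝ)^(k+1)) ^ (-2:ℝ) :=
              Real.rpow_le_rpow_of_nonpos hpos h1 (by norm_num)
            have heq : ((1/2:ℝ)^(k+1)) ^ (-2:ℝ) = (4:ℝ)^(k+1) := by
              have h2 : ((1/2:ℝ)^(k+1)) ^ (-2:ℝ)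
                  = (((1/2:ℝ)^(k+1)) ^ ((2:ℕ):ℝ))⁻¹ := by
                rw [← Real.rpow_neg (by positivity)]; norm_num
              rw [h2, Real.rpow_natCast, ← pow_mul, one_div, inv_pow, inv_inv,
                show (k+1)*2 = 2*(k+1) by ring, pow_mul]
              norm_num
            rw [← Real.enorm_eq_ofReal (by positivity)]
            refine ENNReal.coe_le_coe.mpr ?_
            simp only [← NNReal.coe_le_coe, coe_nnnorm, Real.norm_of_nonneg
              (Real.rpow_nonneg (norm_nonneg y) _), Real.norm_of_nonneg (by positivity : (0:ℝ) ≤ (4:ℝ)^(k+1))]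
            exact heq ▸ hrle
          calc ∫⁻ y in A k, ‖(‖y‖ ^ (-2:ℝ))‖₊ ∂μ
              ≤ ∫⁻ _ in A k, ENNReal.ofReal ((4:ℝ)^(k+1)) ∂μ :=
                setLIntegral_mono measurable_const hb
            _ = ENNReal.ofReal ((4:ℝ)^(k+1)) * μ (A k) := setLIntegral_const _ _
      _ ≤ ∑' k, (ENNReal.ofReal ((4:ℝ)^(k+1)) * (ENNReal.ofReal (((1/2:ℝ)^k)^n)
            * μ (closedBall 0 1))) := by
          refine ENNReal.tsum_le_tsum fun k => ?_
          gcongr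
          calc μ (A k) ≤ μ (closedBall 0 ((1/2:ℝ)^k)) := measure_mono diff_subset
            _ = ENNReal.ofReal (((1/2:ℝ)^k)^(Module.finrank ℝ (EuclideanSpace ℝ (Fin n))))
                  * μ (closedBall 0 1) := Measure.addHaar_closedBall' _ _ (by positivity)
            _ = _ := by rw [finrank_euclideanSpace_fin]
      _ = (∑' k, ENNReal.ofReal ((4:ℝ)^(k+1) * ((1/2:ℝ)^k)^n)) * μ (closedBall 0 1) := by
          rw [← ENNReal.tsum_mul_right]
          congr 1; funext k
          rw [ENNReal.ofReal_mul (by positivity), mul_assoc]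
      _ ≤ (∑' k, ENNReal.ofReal ((4:ℝ) * (1/2:ℝ)^k)) * μ (closedBall 0 1) := by
          refine mul_le_mul_left
            (ENNReal.tsum_le_tsum fun k => ENNReal.ofReal_le_ofReal ?_) _
          calc (4:ℝ)^(k+1) * ((1/2:ℝ)^k)^n
              ≤ (4:ℝ)^(k+1) * ((1/2:ℝ)^k)^3 := by
                apply mul_le_mul_of_nonneg_left _ (by positivity)
                apply pow_le_pow_of_le_one (by positivity) _ hn
                apply pow_le_one₀ (by norm_num) (by norm_num)
            _ = 4 * (1/2:ℝ)^k := by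
                rw [pow_right_comm, pow_succ, mul_comm ((4:ℝ)^k) 4, mul_assoc, ← mul_pow]
                norm_num
      _ < ⊤ := by
          apply ENNReal.mul_lt_top _ measure_closedBall_lt_top
          have hh : ∀ k : ℕ, ENNReal.ofReal ((4:ℝ) * (1/2:ℝ)^k)
              = ENNReal.ofReal 4 * (ENNReal.ofReal (1/2:ℝ))^k := by
            intro k
            rw [ENNReal.ofReal_mul (by norm_num), ENNReal.ofReal_pow (by norm_num)]
          simp_rw [hh]
          rw [ENNReal.tsum_mul_left, ENNReal.tsum_geometric]
          apply ENNReal.mul_lt_top ENNReal.ofReal_lt_top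
          exact ENNReal.inv_lt_top.mpr
            (tsub_pos_iff_lt.mpr (ENNReal.ofReal_lt_one.mpr (by norm_num : (1/2:ℝ) < 1)))


lemma aux_pos (n : ℕ) (hn : 3 ≤ n) (i0 i1 : Fin n) (hne : i1 ≠ i0) :
    0 < ∫ y in Metric.closedBall (0 : EuclideanSpace ℝ (Fin n)) 1,
      ∑ i ∈ Finset.univ \ {i0}, (y i) ^ 2 := by
  set S : EuclideanSpace ℝ (Fin n) → ℝ :=
    fun y => ∑ i ∈ Finset.univ \ {i0}, (y i) ^ 2 with hS
  have hScont : Continuous S := by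
    apply continuous_finset_sum
    intro i _
    exact ((EuclideanSpace.proj (𝕜 := ℝ) i).continuous).pow 2
  have hSnonneg : ∀ y, 0 ≤ S y := fun y => Finset.sum_nonneg fun i _ => sq_nonneg _
  have hSint : IntegrableOn S (Metric.closedBall 0 1) volume :=
    hScont.continuousOn.integrableOn_compact (isCompact_closedBall _ _)
  rw [setIntegral_pos_iff_support_of_nonneg_ae
    (Filter.Eventually.of_forall fun y => hSnonneg y) hSint]
  have hker : volume ({y : EuclideanSpace ℝ (Fin n) | y i1 = 0}) = 0 := by
    have h1 : ({y : EuclideanSpace ℝ (Fin n) | y i1 = 0} : Set _)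
        = (LinearMap.ker ((EuclideanSpace.proj (𝕜 := ℝ) i1)
            : EuclideanSpace ℝ (Fin n) →ₗ[ℝ] ℝ) : Set _) := by
      ext y; simp [LinearMap.mem_ker]
    rw [h1]
    apply Measure.addHaar_submodule
    intro h
    have : EuclideanSpace.single i1 (1:ℝ) ∈ LinearMap.ker
        ((EuclideanSpace.proj (𝕜 := ℝ) i1) : EuclideanSpace ℝ (Fin n) →ₗ[ℝ] ℝ) := by
      rw [h]; trivial
    simp [LinearMap.mem_ker] at this
  have hsub : Metric.closedBall (0 : EuclideanSpace ℝ (Fin n)) 1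
        \ {y : EuclideanSpace ℝ (Fin n) | y i1 = 0}
      ⊆ Function.support S ∩ Metric.closedBall 0 1 := by
    rintro y ⟨hy1, hy2⟩
    refine ⟨?_, hy1⟩
    simp only [Function.mem_support]
    intro h0
    apply hy2
    have : (y i1)^2 = 0 := by
      have hle : (y i1)^2 ≤ S y := by
        apply Finset.single_le_sum (f := fun i => (y i)^2)
          (fun i _ => sq_nonneg _)
        exact Finset.mem_sdiff.mpr ⟨Finset.mem_univ _, by simp [hne]⟩
      have := hSnonneg y
      nlinarith [sq_nonneg (y i1)]
    exact (pow_eq_zero_iff (two_ne_zero)).mp this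
  calc (0:ℝ≥0∞) < volume (Metric.closedBall (0 : EuclideanSpace ℝ (Fin n)) 1) :=
        measure_closedBall_pos _ _ one_pos
    _ = volume (Metric.closedBall (0 : EuclideanSpace ℝ (Fin n)) 1
          \ {y : EuclideanSpace ℝ (Fin n) | y i1 = 0}) :=
        (measure_diff_null hker).symm
    _ ≤ volume (Function.support S ∩ Metric.closedBall 0 1) := measure_mono hsub

set_option maxHeartbeats 1000000 in
lemma main_aux (n : ℕ) (hn : 3 ≤ n) (β : ℝ) (hβ : 0 < β) (i0 : Fin n) :
    ∃ α₀ : ℝ, (n : ℝ) < α₀ ∧ α₀ < n + 1 ∧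
      ∀ α : ℝ, α₀ ≤ α → α < n + 1 →
        0 < ∫ y in
            (Metric.closedBall (0 : EuclideanSpace ℝ (Fin n)) 1 ∪
              (Metric.closedBall (0 : EuclideanSpace ℝ (Fin n)) (1 + 1 / β) ∩
                {y : EuclideanSpace ℝ (Fin n) |
                  ∑ i ∈ Finset.univ \ {i0}, (y i) ^ 2 ≤
                    ((n : ℝ) + 1 - α) * (y i0) ^ 2})),
          ‖y‖ ^ (α - n - 4) *
            (-(((n : ℝ) + 1 - α)) * (y i0) ^ 2 +
              ∑ i ∈ Finset.univ \ {i0}, (y i) ^ 2) := by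
  classical
  set S : EuclideanSpace ℝ (Fin n) → ℝ := fun y => ∑ i ∈ Finset.univ \ {i0}, (y i) ^ 2 with hSdef
  have hScont : Continuous S :=
    continuous_finset_sum _ fun i _ => ((EuclideanSpace.proj (𝕜 := ℝ) i).continuous).pow 2
  have hSnonneg : ∀ y, 0 ≤ S y := fun y => Finset.sum_nonneg fun i _ => sq_nonneg _
  set B1 : Set (EuclideanSpace ℝ (Fin n)) := Metric.closedBall 0 1 with hB1def
  set B2 : Set (EuclideanSpace ℝ (Fin n)) := Metric.closedBall 0 (1 + 1/β) with hB2def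
  -- norm-squared identity
  have hnorm2 : ∀ y : EuclideanSpace ℝ (Fin n), ‖y‖^2 = ∑ i, (y i)^2 := by
    intro y
    rw [EuclideanSpace.norm_eq, Real.sq_sqrt (Finset.sum_nonneg fun i _ => sq_nonneg _)]
    simp [Real.norm_eq_abs, sq_abs]
  have hcoord_le : ∀ (y : EuclideanSpace ℝ (Fin n)) (i : Fin n), (y i)^2 ≤ ‖y‖^2 := by
    intro y i
    rw [hnorm2]
    exact Finset.single_le_sum (f := fun i => (y i)^2) (fun j _ => sq_nonneg _)
      (Finset.mem_univ i)
  have hS_le : ∀ y : EuclideanSpace ℝ (Fin n), S y ≤ ‖y‖^2 := by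
    intro y
    rw [hnorm2]
    exact Finset.sum_le_sum_of_subset_of_nonneg (Finset.sdiff_subset)
      (fun j _ _ => sq_nonneg _)
  -- the index i1
  have hex_i1 : ∃ i1 : Fin n, i1 ≠ i0 := by
    rcases eq_or_ne i0 ⟨0, by omega⟩ with h | h
    · exact ⟨⟨1, by omega⟩, by rw [h]; simp [Fin.ext_iff]⟩
    · exact ⟨⟨0, by omega⟩, fun hc => h (hc ▸ rfl)⟩
  obtain ⟨i1, hi1⟩ := hex_i1
  -- constants
  set c₀ : ℝ := ∫ y in B1, S y with hc₀def
  have hc₀ : 0 < c₀ := aux_pos n hn i0 i1 hi1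
  have hSint : IntegrableOn S B1 volume :=
    hScont.continuousOn.integrableOn_compact (isCompact_closedBall _ _)
  have hRint : IntegrableOn (fun y : EuclideanSpace ℝ (Fin n) => ‖y‖ ^ (-2:ℝ)) B1 volume := aux_int n hn
  set M : ℝ := ∫ y in B1, ‖y‖ ^ (-2:ℝ) with hMdef
  have hM0 : 0 ≤ M :=
    setIntegral_nonneg measurableSet_closedBall fun y _ => Real.rpow_nonneg (norm_nonneg _) _
  have hB2fin : volume B2 ≠ ⊤ := measure_closedBall_lt_top.ne
  set K : ℝ := (1 + 1/β)^2 * (volume B2).toReal with hKdef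
  have hK0 : 0 ≤ K := mul_nonneg (sq_nonneg _) ENNReal.toReal_nonneg
  set ε : ℝ := min (c₀ / (2*(M+K+1))) (1/2) with hεdef
  have hε0 : 0 < ε := lt_min (by positivity) (by norm_num)
  have hε12 : ε ≤ 1/2 := min_le_right _ _
  refine ⟨(n:ℝ) + 1 - ε, by linarith, by linarith, ?_⟩
  intro α hα₀ hαlt
  have hαn : (n:ℝ) < α := by linarith
  set δ : ℝ := (n:ℝ) + 1 - α with hδdef
  have hδ0 : 0 < δ := by simp only [hδdef]; linarith
  have hδε : δ ≤ ε := by simp only [hδdef]; linarith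
  have hδ1 : δ ≤ 1 := by linarith
  set C : Set (EuclideanSpace ℝ (Fin n)) := {y : EuclideanSpace ℝ (Fin n) | S y ≤ δ * (y i0)^2} with hCdef
  set X : Set (EuclideanSpace ℝ (Fin n)) := B1 ∪ (B2 ∩ C) with hXdef
  set f : EuclideanSpace ℝ (Fin n) → ℝ := fun y => ‖y‖ ^ (α - n - 4) * (-δ * (y i0)^2 + S y) with hfdef
  show 0 < ∫ y in X, f y
  -- basic measurability
  have hCclosed : IsClosed C :=
    isClosed_le hScont (by
      exact (continuous_const.mul (((EuclideanSpace.proj (𝕜 := ℝ) i0).continuous).pow 2)))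
  have hXmeas : MeasurableSet X :=
    measurableSet_closedBall.union (measurableSet_closedBall.inter hCclosed.measurableSet)
  have hfmeas : Measurable f := by
    apply (measurable_norm.pow_const _).mul
    exact ((continuous_const.mul (((EuclideanSpace.proj (𝕜 := ℝ) i0).continuous).pow 2)).add
      hScont).measurable
  -- exponent facts
  have hexp_neg : α - (n:ℝ) - 4 ≤ -3 := by linarith
  have hexp_ge : (-2:ℝ) ≤ α - (n:ℝ) - 2 := by linarith
  -- pointwise bound on B1
  have h1 : ∀ y ∈ B1, S y - δ * ‖y‖ ^ (-2:ℝ) ≤ f y := by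
    intro y hy
    rcases eq_or_ne y 0 with rfl | hy0
    · have h00 : S (0:EuclideanSpace ℝ (Fin n)) = 0 := by
        simp only [hSdef]
        apply Finset.sum_eq_zero
        intro i _
        norm_num [show (0:EuclideanSpace ℝ (Fin n)) i = 0 from rfl]
      simp only [hfdef, h00, norm_zero]
      rw [Real.zero_rpow (by linarith : α - (n:ℝ) - 4 ≠ 0),
        Real.zero_rpow (by norm_num : (-2:ℝ) ≠ 0)]
      show (0:ℝ) - δ * 0 ≤ 0 * (-δ * ((0:EuclideanSpace ℝ (Fin n)) i0)^2 + 0)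
      simp
    · have hyp : 0 < ‖y‖ := norm_pos_iff.mpr hy0
      have hy1 : ‖y‖ ≤ 1 := mem_closedBall_zero_iff.mp hy
      have hge1 : 1 ≤ ‖y‖ ^ (α - (n:ℝ) - 4) :=
        Real.one_le_rpow_of_pos_of_le_one_of_nonpos hyp hy1 (by linarith)
      have hA : S y ≤ ‖y‖ ^ (α - (n:ℝ) - 4) * S y :=
        le_mul_of_one_le_left (hSnonneg y) hge1
      have hB : ‖y‖ ^ (α - (n:ℝ) - 4) * (y i0)^2 ≤ ‖y‖ ^ (-2:ℝ) := by
        calc ‖y‖ ^ (α - (n:ℝ) - 4) * (y i0)^2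
            ≤ ‖y‖ ^ (α - (n:ℝ) - 4) * ‖y‖ ^ (2:ℝ) := by
              apply mul_le_mul_of_nonneg_left _ (Real.rpow_nonneg (norm_nonneg _) _)
              rw [Real.rpow_two]
              exact hcoord_le y i0
          _ = ‖y‖ ^ (α - (n:ℝ) - 2) := by
              rw [← Real.rpow_add hyp]; ring_nf
          _ ≤ ‖y‖ ^ (-2:ℝ) := Real.rpow_le_rpow_of_exponent_ge hyp hy1 hexp_ge
      have hfeq : f y = ‖y‖ ^ (α - (n:ℝ) - 4) * S y
          - δ * (‖y‖ ^ (α - (n:ℝ) - 4) * (y i0)^2) := by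
        simp only [hfdef]; ring
      have hδB : δ * (‖y‖ ^ (α - (n:ℝ) - 4) * (y i0)^2) ≤ δ * ‖y‖ ^ (-2:ℝ) :=
        mul_le_mul_of_nonneg_left hB hδ0.le
      linarith
  -- pointwise bound on X \ B1
  have h2 : ∀ y ∈ X \ B1, -(δ * (1 + 1/β)^2) ≤ f y := by
    rintro y ⟨hyX, hyB1⟩
    have hyBC : y ∈ B2 ∩ C := hyX.resolve_left hyB1
    have hy2 : ‖y‖ ≤ 1 + 1/β := mem_closedBall_zero_iff.mp hyBC.1
    have hyC : S y ≤ δ * (y i0)^2 := hyBC.2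
    have hgt1 : 1 ≤ ‖y‖ := by
      by_contra h
      exact hyB1 (mem_closedBall_zero_iff.mpr (le_of_not_ge h))
    have ha0 : 0 ≤ ‖y‖ ^ (α - (n:ℝ) - 4) := Real.rpow_nonneg (norm_nonneg _) _
    have ha1 : ‖y‖ ^ (α - (n:ℝ) - 4) ≤ 1 :=
      Real.rpow_le_one_of_one_le_of_nonpos hgt1 (by linarith)
    have ht0 : -δ * (y i0)^2 + S y ≤ 0 := by linarith
    have hstep : 1 * (-δ * (y i0)^2 + S y) ≤ ‖y‖ ^ (α - (n:ℝ) - 4) * (-δ * (y i0)^2 + S y) :=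
      mul_le_mul_of_nonpos_right ha1 ht0
    have hbd : -(δ * (1 + 1/β)^2) ≤ -δ * (y i0)^2 + S y := by
      have h1' : (y i0)^2 ≤ ‖y‖^2 := hcoord_le y i0
      have h2' : ‖y‖^2 ≤ (1 + 1/β)^2 := by
        apply pow_le_pow_left₀ (norm_nonneg _) hy2
      nlinarith [hSnonneg y, hδ0.le]
    calc -(δ * (1 + 1/β)^2) ≤ -δ * (y i0)^2 + S y := hbd
      _ = 1 * (-δ * (y i0)^2 + S y) := (one_mul _).symm
      _ ≤ f y := hstep
  -- integrability on B1
  have hint1 : IntegrableOn f B1 volume := by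
    apply Integrable.mono' (hRint.const_mul 2) hfmeas.aestronglyMeasurable
    filter_upwards [ae_restrict_mem (measurableSet_closedBall : MeasurableSet B1)] with y hy
    rcases eq_or_ne y 0 with rfl | hy0
    · have h00 : S (0:EuclideanSpace ℝ (Fin n)) = 0 := by
        apply Finset.sum_eq_zero; intro i _
        norm_num [show (0:EuclideanSpace ℝ (Fin n)) i = 0 from rfl]
      simp only [hfdef, h00, norm_zero]
      rw [Real.zero_rpow (by linarith : α - (n:ℝ) - 4 ≠ 0),
        Real.zero_rpow (by norm_num : (-2:ℝ) ≠ 0)]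
      simp
    · have hyp : 0 < ‖y‖ := norm_pos_iff.mpr hy0
      have hy1 : ‖y‖ ≤ 1 := mem_closedBall_zero_iff.mp hy
      have h1' : (y i0)^2 ≤ ‖y‖^2 := hcoord_le y i0
      have h2' : S y ≤ ‖y‖^2 := hS_le y
      have habs : |(-δ * (y i0)^2 + S y)| ≤ 2 * ‖y‖^2 := by
        rw [abs_le]
        constructor
        · nlinarith [hSnonneg y, sq_nonneg (y i0), hδ0.le]
        · nlinarith [hSnonneg y, sq_nonneg (y i0), hδ0.le]
      have hprod : ‖y‖ ^ (α - (n:ℝ) - 4) * ‖y‖^2 = ‖y‖ ^ (α - (n:ℝ) - 2) := by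
        rw [← Real.rpow_two, ← Real.rpow_add hyp]; ring_nf
      calc ‖f y‖ = ‖y‖ ^ (α - (n:ℝ) - 4) * |(-δ * (y i0)^2 + S y)| := by
            rw [Real.norm_eq_abs, abs_mul,
              abs_of_nonneg (Real.rpow_nonneg (norm_nonneg _) _)]
        _ ≤ ‖y‖ ^ (α - (n:ℝ) - 4) * (2 * ‖y‖^2) :=
            mul_le_mul_of_nonneg_left habs (Real.rpow_nonneg (norm_nonneg _) _)
        _ = 2 * ‖y‖ ^ (α - (n:ℝ) - 2) := by rw [← hprod]; ring
        _ ≤ 2 * ‖y‖ ^ (-2:ℝ) := by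
            apply mul_le_mul_of_nonneg_left
              (Real.rpow_le_rpow_of_exponent_ge hyp hy1 hexp_ge) (by norm_num)
  -- integrability on X \ B1
  have hXdmeas : MeasurableSet (X \ B1) := hXmeas.diff measurableSet_closedBall
  have hXdsub : X \ B1 ⊆ B2 := by
    rintro y ⟨hyX, hyB1⟩
    exact (hyX.resolve_left hyB1).1
  have hXdfin : volume (X \ B1) ≠ ⊤ :=
    ((measure_mono hXdsub).trans_lt measure_closedBall_lt_top).ne
  have hint2 : IntegrableOn f (X \ B1) volume := by
    apply Measure.integrableOn_of_bounded hXdfin hfmeas.aestronglyMeasurable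
    filter_upwards [ae_restrict_mem hXdmeas] with y hy
    obtain ⟨hyX, hyB1⟩ := hy
    have hyBC : y ∈ B2 ∩ C := hyX.resolve_left hyB1
    have hy2 : ‖y‖ ≤ 1 + 1/β := mem_closedBall_zero_iff.mp hyBC.1
    have hgt1 : 1 ≤ ‖y‖ := by
      by_contra h
      exact hyB1 (mem_closedBall_zero_iff.mpr (le_of_not_ge h))
    have ha0 : 0 ≤ ‖y‖ ^ (α - (n:ℝ) - 4) := Real.rpow_nonneg (norm_nonneg _) _
    have ha1 : ‖y‖ ^ (α - (n:ℝ) - 4) ≤ 1 :=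
      Real.rpow_le_one_of_one_le_of_nonpos hgt1 (by linarith)
    have h1' : (y i0)^2 ≤ ‖y‖^2 := hcoord_le y i0
    have h2' : S y ≤ ‖y‖^2 := hS_le y
    have h3' : ‖y‖^2 ≤ (1 + 1/β)^2 := pow_le_pow_left₀ (norm_nonneg _) hy2 2
    have habs : |(-δ * (y i0)^2 + S y)| ≤ 2 * (1 + 1/β)^2 := by
      rw [abs_le]
      constructor
      · nlinarith [hSnonneg y, sq_nonneg (y i0), hδ0.le]
      · nlinarith [hSnonneg y, sq_nonneg (y i0), hδ0.le]
    calc ‖f y‖ = ‖y‖ ^ (α - (n:ℝ) - 4) * |(-δ * (y i0)^2 + S y)| := by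
          rw [Real.norm_eq_abs, abs_mul,
            abs_of_nonneg (Real.rpow_nonneg (norm_nonneg _) _)]
      _ ≤ 1 * (2 * (1 + 1/β)^2) := by
          apply mul_le_mul ha1 habs (abs_nonneg _) (by norm_num)
      _ = 2 * (1 + 1/β)^2 := one_mul _
  -- split the integral
  have hB1X : B1 ⊆ X := subset_union_left
  have hXsplit : ∫ y in X, f y = (∫ y in B1, f y) + ∫ y in X \ B1, f y := by
    conv_lhs => rw [← union_diff_cancel hB1X]
    exact setIntegral_union disjoint_sdiff_right hXdmeas hint1 hint2
  -- lower bound on B1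
  have hg1int : IntegrableOn (fun y : EuclideanSpace ℝ (Fin n) => S y - δ * ‖y‖ ^ (-2:ℝ)) B1 volume :=
    hSint.sub (hRint.const_mul δ)
  have hL1 : c₀ - δ * M ≤ ∫ y in B1, f y := by
    have hmono := setIntegral_mono_on hg1int hint1
      (measurableSet_closedBall : MeasurableSet B1) h1
    rw [integral_sub hSint (hRint.const_mul δ), integral_const_mul] at hmono
    exact hmono
  -- lower bound on X \ B1
  have hL2 : -(δ * (1 + 1/β)^2) * (volume B2).toReal ≤ ∫ y in X \ B1, f y := by
    have hconst : IntegrableOn (fun _ : EuclideanSpace ℝ (Fin n) => -(δ * (1 + 1/β)^2)) (X \ B1) volume := by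
      apply (integrableOn_const_iff enorm_ne_top).mpr
      exact Or.inr (lt_top_iff_ne_top.mpr hXdfin)
    have hmono := setIntegral_mono_on hconst hint2 hXdmeas h2
    rw [setIntegral_const] at hmono
    have htr : (volume (X \ B1)).toReal ≤ (volume B2).toReal :=
      ENNReal.toReal_mono hB2fin (measure_mono hXdsub)
    calc -(δ * (1 + 1/β)^2) * (volume B2).toReal
        ≤ -(δ * (1 + 1/β)^2) * (volume (X \ B1)).toReal := by
          apply mul_le_mul_of_nonpos_left htr
          nlinarith [hδ0.le, sq_nonneg (1 + 1/β)]
      _ = (volume (X \ B1)).toReal • -(δ * (1 + 1/β)^2) := by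
          rw [smul_eq_mul]; ring
      _ ≤ ∫ y in X \ B1, f y := hmono
  -- final arithmetic
  have hδMK : δ * (M + K) ≤ c₀ / 2 := by
    have h1' : δ ≤ c₀ / (2*(M+K+1)) := le_trans hδε (min_le_left _ _)
    have h3' : (0:ℝ) < 2*(M+K+1) := by linarith
    rw [le_div_iff₀ h3'] at h1'
    nlinarith [hδ0.le, hM0, hK0]
  have : c₀ - δ * (M + K) ≤ ∫ y in X, f y := by
    rw [hXsplit, hKdef]
    have : -(δ * (1 + 1/β)^2) * (volume B2).toReal
        = -(δ * ((1 + 1/β)^2 * (volume B2).toReal)) := by ring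
    nlinarith [hL1, hL2]
  clear_value δ ε K M c₀
  exact lt_of_lt_of_le (by linarith [hδMK, hc₀]) this

theorem stmt_17 (n : ℕ) (hn : 3 ≤ n) (β : ℝ) (hβ : 0 < β) :
    ∃ α₀ : ℝ, (n : ℝ) < α₀ ∧ α₀ < n + 1 ∧
      ∀ α : ℝ, α₀ ≤ α → α < n + 1 →
        0 < ∫ y in
            (Metric.closedBall (0 : EuclideanSpace ℝ (Fin n)) 1 ∪
              (Metric.closedBall (0 : EuclideanSpace ℝ (Fin n)) (1 + 1 / β) ∩
                {y : EuclideanSpace ℝ (Fin n) |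
                  ∑ i ∈ Finset.univ \ {(⟨0, by omega⟩ : Fin n)}, (y i) ^ 2 ≤
                    ((n : ℝ) + 1 - α) * (y (⟨0, by omega⟩ : Fin n)) ^ 2})),
          ‖y‖ ^ (α - n - 4) *
            (-(((n : ℝ) + 1 - α)) * (y (⟨0, by omega⟩ : Fin n)) ^ 2 +
              ∑ i ∈ Finset.univ \ {(⟨0, by omega⟩ : Fin n)}, (y i) ^ 2) := by
  exact main_aux n hn β hβ ⟨0, by omega⟩
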